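/- For every fixed integer d ≥ 3, as M → ∞ the average effective resistance of the d-dimensional toroidal grid converges to R^hydro_d; that is, the sequence M ↦ M^{-d} Σ_{k ∈ {0,...,M-1}^d, k ≠ 0} (2d - 2 Σ_{i=1}^d cos(2π k_i / M))^{-1} tends to ∫_{[0,1]^d} (2d - 2 Σ_{i=1}^d cos(2π x_i))^{-1} dx. -/

import Mathlib

open Real Finset Filter MeasureTheory

/-- Average effective resistance of the `d`-dimensional toroidal grid `T_{M^d}`
(spectral formula). -/
noncomputable def RaveTorus (d M : ℕ) : ℝ :=
  (1 / (M : ℝ) ^ d) *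
    ∑ k ∈ (Fintype.piFinset fun _ : Fin d => Finset.range M).filter (· ≠ 0),
      (2 * d - 2 * ∑ i, Real.cos (2 * π * k i / M))⁻¹

namespace TorusAux

noncomputable section

/-- distance to nearest endpoint of `[0,1]` -/
def mfun (t : ℝ) : ℝ := min t (1 - t)

def Sfun (d : ℕ) (x : Fin d → ℝ) : ℝ := ∑ i, mfun (x i) ^ 2

def Dfun (d : ℕ) (x : Fin d → ℝ) : ℝ := 2 * d - 2 * ∑ i, Real.cos (2 * π * x i)

def ffun (d : ℕ) (x : Fin d → ℝ) : ℝ := (Dfun d x)⁻¹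

def phi (d M : ℕ) (x : Fin d → ℝ) : Fin d → ℝ := fun i => (⌊(M : ℝ) * x i⌋ : ℝ) / M

def FF (d M : ℕ) (x : Fin d → ℝ) : ℝ := ffun d (phi d M x)

def cube (d : ℕ) : Set (Fin d → ℝ) := Set.univ.pi fun _ => Set.Icc (0 : ℝ) 1

def vfun (d : ℕ) (t : ℝ) : ℝ := (mfun t ^ 2) ^ (-(1 / (d : ℝ)))

def ufun (d : ℕ) : ℝ → ℝ := (Set.Icc (0 : ℝ) 1).indicator (vfun d)

def gfun (d : ℕ) (x : Fin d → ℝ) : ℝ :=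
  ((2 * d + 2) / 16 * (d : ℝ)⁻¹) * ∏ i, ufun d (x i)

lemma mfun_nonneg {t : ℝ} (h : t ∈ Set.Icc (0:ℝ) 1) : 0 ≤ mfun t :=
  le_min h.1 (by linarith [h.2])

lemma sin_ge {t : ℝ} (h : t ∈ Set.Icc (0:ℝ) 1) : 2 * mfun t ≤ Real.sin (π * t) := by
  obtain ⟨h0, h1⟩ := h
  rcases le_or_gt t (1/2) with ht | ht
  · have hm : mfun t = t := min_eq_left (by linarith)
    have := Real.mul_le_sin (x := π * t) (by positivity) (by nlinarith [Real.pi_pos])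
    rw [hm]
    calc 2 * t = 2 / π * (π * t) := by field_simp
    _ ≤ Real.sin (π * t) := this
  · have hm : mfun t = 1 - t := min_eq_right (by linarith)
    have h' : Real.sin (π * t) = Real.sin (π * (1 - t)) := by
      rw [mul_one_sub, Real.sin_pi_sub]
    have := Real.mul_le_sin (x := π * (1 - t)) (by nlinarith [Real.pi_pos])
      (by nlinarith [Real.pi_pos])
    rw [hm, h']
    calc 2 * (1 - t) = 2 / π * (π * (1 - t)) := by field_simp
    _ ≤ Real.sin (π * (1 - t)) := this

lemma sub_cos_ge {t : ℝ} (h : t ∈ Set.Icc (0:ℝ) 1) :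
    16 * mfun t ^ 2 ≤ 2 - 2 * Real.cos (2 * π * t) := by
  have h2 : 2 * π * t = 2 * (π * t) := by ring
  have hc : Real.cos (2 * (π * t)) = 1 - 2 * Real.sin (π * t) ^ 2 := by
    have := Real.cos_two_mul (π * t)
    have := Real.sin_sq_add_cos_sq (π * t)
    nlinarith
  have hs := sin_ge h
  have hm := mfun_nonneg h
  rw [h2, hc]
  nlinarith

lemma Sfun_nonneg (d : ℕ) (x : Fin d → ℝ) : 0 ≤ Sfun d x :=
  Finset.sum_nonneg fun i _ => sq_nonneg _

lemma Dfun_eq (d : ℕ) (x : Fin d → ℝ) :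
    Dfun d x = ∑ i, (2 - 2 * Real.cos (2 * π * x i)) := by
  simp [Dfun, Finset.sum_sub_distrib, Finset.mul_sum]; ring

lemma Dfun_ge (d : ℕ) {x : Fin d → ℝ} (h : ∀ i, x i ∈ Set.Icc (0:ℝ) 1) :
    16 * Sfun d x ≤ Dfun d x := by
  rw [Dfun_eq, Sfun, Finset.mul_sum]
  exact Finset.sum_le_sum fun i _ => sub_cos_ge (h i)

lemma Dfun_nonneg (d : ℕ) {x : Fin d → ℝ} (h : ∀ i, x i ∈ Set.Icc (0:ℝ) 1) :
    0 ≤ Dfun d x :=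
  le_trans (by nlinarith [Sfun_nonneg d x]) (Dfun_ge d h)

lemma ffun_nonneg (d : ℕ) {x : Fin d → ℝ} (h : ∀ i, x i ∈ Set.Icc (0:ℝ) 1) :
    0 ≤ ffun d x := inv_nonneg.2 (Dfun_nonneg d h)

lemma inv_S_le {d : ℕ} (hd : 0 < d) {x : Fin d → ℝ} (h : ∀ i, x i ∈ Set.Ioo (0:ℝ) 1) :
    (Sfun d x)⁻¹ ≤ (d : ℝ)⁻¹ * ∏ i, vfun d (x i) := by
  have hdR : (0:ℝ) < d := by exact_mod_cast hd
  set z : Fin d → ℝ := fun i => mfun (x i) ^ 2 with hz_def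
  have hz : ∀ i, 0 < z i := by
    intro i
    have h1 := (h i).1; have h2 := (h i).2
    have : 0 < mfun (x i) := lt_min h1 (by linarith)
    positivity
  have hAM := Real.geom_mean_le_arith_mean_weighted Finset.univ
    (fun _ => (d : ℝ)⁻¹) z (fun i _ => by positivity)
    (by simp [Finset.card_univ]; field_simp) (fun i _ => (hz i).le)
  have hsum : ∑ i, (d:ℝ)⁻¹ * z i = (d:ℝ)⁻¹ * Sfun d x := by
    rw [Sfun, Finset.mul_sum]
  rw [hsum] at hAM
  set P : ℝ := ∏ i, z i ^ ((d:ℝ)⁻¹) with hP_def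
  have hPpos : 0 < P := Finset.prod_pos fun i _ => Real.rpow_pos_of_pos (hz i) _
  have hdP : (d:ℝ) * P ≤ Sfun d x := by
    calc (d:ℝ) * P ≤ (d:ℝ) * ((d:ℝ)⁻¹ * Sfun d x) :=
          mul_le_mul_of_nonneg_left hAM hdR.le
    _ = Sfun d x := by field_simp
  have hprod : ∏ i, vfun d (x i) = P⁻¹ := by
    rw [hP_def, ← Finset.prod_inv_distrib]
    refine Finset.prod_congr rfl fun i _ => ?_
    rw [vfun, ← Real.rpow_neg (hz i).le, one_div]
  rw [hprod]
  have hSpos : 0 < Sfun d x := lt_of_lt_of_le (by positivity) hdP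
  calc (Sfun d x)⁻¹ ≤ ((d:ℝ) * P)⁻¹ := by
        exact inv_anti₀ (by positivity) hdP
  _ = (d:ℝ)⁻¹ * P⁻¹ := by rw [mul_inv]


lemma vfun_nonneg (d : ℕ) (t : ℝ) : 0 ≤ vfun d t := Real.rpow_nonneg (sq_nonneg _) _

lemma ufun_nonneg (d : ℕ) (t : ℝ) : 0 ≤ ufun d t :=
  Set.indicator_nonneg (fun t _ => vfun_nonneg d t) t

lemma gfun_nonneg (d : ℕ) (x : Fin d → ℝ) : 0 ≤ gfun d x := by
  apply mul_nonneg
  · positivity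
  · exact Finset.prod_nonneg fun i _ => ufun_nonneg d _

lemma vfun_measurable (d : ℕ) : Measurable (vfun d) := by
  have h1 : Measurable fun t : ℝ => (min t (1 - t)) ^ 2 :=
    (measurable_id'.min (measurable_const.sub measurable_id')).pow_const 2
  have h2 : Measurable fun y : ℝ => y ^ (-(1/(d:ℝ))) := by measurability
  exact h2.comp h1

lemma vfun_integrableOn {d : ℕ} (hd : 3 ≤ d) :
    IntegrableOn (vfun d) (Set.Icc (0:ℝ) 1) := by
  have hdR : (3:ℝ) ≤ d := by exact_mod_cast hd
  have hexp : (-1:ℝ) < -(2 / (d:ℝ)) := by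
    rw [neg_lt_neg_iff]
    rw [div_lt_one (by linarith)]
    linarith
  have b1 : IntegrableOn (fun t : ℝ => t ^ (-(2/(d:ℝ)))) (Set.Ioc 0 1) :=
    (intervalIntegral.intervalIntegrable_rpow' (a := 0) (b := 1) hexp).1
  have b2 : IntegrableOn (fun t : ℝ => (1 - t) ^ (-(2/(d:ℝ)))) (Set.Ioc 0 1) := by
    have := ((intervalIntegral.intervalIntegrable_rpow' (a := 0) (b := 1) hexp).comp_sub_left
      1).symm
    simpa using this.1
  rw [integrableOn_Icc_iff_integrableOn_Ioc]
  apply Integrable.mono' (b1.add b2)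
    ((vfun_measurable d).aestronglyMeasurable)
  filter_upwards [ae_restrict_mem measurableSet_Ioc] with t ht
  obtain ⟨ht0, ht1⟩ := ht
  have hmnn : 0 ≤ mfun t := mfun_nonneg ⟨ht0.le, ht1⟩
  have hkey : ∀ a : ℝ, 0 ≤ a → (a ^ 2 : ℝ) ^ (-(1/(d:ℝ))) = a ^ (-(2/(d:ℝ))) := by
    intro a ha
    rw [← Real.rpow_natCast a 2, ← Real.rpow_mul ha]
    congr 1
    push_cast
    ring
  rw [Real.norm_eq_abs, abs_of_nonneg (vfun_nonneg d t), vfun, hkey _ hmnn]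
  rcases min_le_iff.1 (le_refl (mfun t)) with _ | _
  all_goals {
    rcases le_total t (1 - t) with hc | hc
    · have : mfun t = t := min_eq_left hc
      rw [this]
      exact le_add_of_nonneg_right (Real.rpow_nonneg (by linarith) _)
    · have : mfun t = 1 - t := min_eq_right hc
      rw [this]
      exact le_add_of_nonneg_left (Real.rpow_nonneg ht0.le _) }

lemma ufun_integrable {d : ℕ} (hd : 3 ≤ d) : Integrable (ufun d) := by
  rw [ufun, integrable_indicator_iff measurableSet_Icc]
  exact vfun_integrableOn hd

lemma gfun_integrable {d : ℕ} (hd : 3 ≤ d) : Integrable (gfun d) := by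
  unfold gfun
  exact (Integrable.fintype_prod (𝕜 := ℝ) (f := fun _ : Fin d => ufun d)
    (fun _ => ufun_integrable hd)).const_mul _

lemma phi_mem {d M : ℕ} (hM : 1 ≤ M) {x : Fin d → ℝ} (hx : ∀ i, x i ∈ Set.Ioo (0:ℝ) 1)
    (i : Fin d) :
    0 ≤ phi d M x i ∧ phi d M x i ≤ x i ∧ x i < phi d M x i + 1/M ∧ phi d M x i < 1 := by
  have hM0 : (0:ℝ) < M := by exact_mod_cast hM
  have hx0 := (hx i).1
  have hx1 := (hx i).2
  have hfl0 : (0:ℤ) ≤ ⌊(M:ℝ) * x i⌋ := Int.floor_nonneg.2 (by positivity)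
  have hfl0R : (0:ℝ) ≤ (⌊(M:ℝ) * x i⌋ : ℝ) := by exact_mod_cast hfl0
  have hle : (⌊(M:ℝ) * x i⌋ : ℝ) ≤ M * x i := Int.floor_le _
  have hlt : M * x i < (⌊(M:ℝ) * x i⌋ : ℝ) + 1 := Int.lt_floor_add_one _
  have hltM : (⌊(M:ℝ) * x i⌋ : ℝ) < M := lt_of_le_of_lt hle (by nlinarith)
  refine ⟨by rw [phi]; exact div_nonneg hfl0R hM0.le, ?_, ?_, ?_⟩
  · rw [phi, div_le_iff₀ hM0]
    nlinarith
  · rw [phi, ← add_div, lt_div_iff₀ hM0]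
    nlinarith
  · rw [phi, div_lt_one hM0]
    exact hltM

lemma FF_le_gfun {d : ℕ} (hd : 3 ≤ d) (M : ℕ) {x : Fin d → ℝ}
    (hx : ∀ i, x i ∈ Set.Ioo (0:ℝ) 1) : ‖FF d M x‖ ≤ gfun d x := by
  have hd0 : 0 < d := by omega
  rcases Nat.eq_zero_or_pos M with rfl | hM
  · have : FF d 0 x = 0 := by
      simp [FF, ffun, phi, Dfun, mul_comm]
    rw [this]
    simpa using gfun_nonneg d x
  have hM0 : (0:ℝ) < M := by exact_mod_cast hM
  set t := phi d M x with ht_def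
  have hmem : ∀ i, 0 ≤ t i ∧ t i ≤ x i ∧ x i < t i + 1/(M:ℝ) ∧ t i < 1 := by
    rw [ht_def]; exact phi_mem hM hx
  have htIcc : ∀ i, t i ∈ Set.Icc (0:ℝ) 1 := fun i =>
    ⟨(hmem i).1, ((hmem i).2.2.2).le⟩
  rw [Real.norm_eq_abs, abs_of_nonneg (show 0 ≤ FF d M x from ffun_nonneg d htIcc)]
  by_cases hzero : ∀ i, t i = 0
  · have hD : Dfun d t = 0 := by
      rw [Dfun_eq]
      apply Finset.sum_eq_zero
      intro i _
      rw [hzero i]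
      simp
    rw [FF, ← ht_def, ffun, hD, inv_zero]
    exact gfun_nonneg d x
  push_neg at hzero
  obtain ⟨i₀, hi₀⟩ := hzero
  -- lower bound on S t
  have hmt : 1/(M:ℝ) ≤ mfun (t i₀) := by
    have h1 : 1/(M:ℝ) ≤ t i₀ := by
      have hfl0 : (0:ℤ) ≤ ⌊(M:ℝ) * x i₀⌋ :=
        Int.floor_nonneg.2 (by nlinarith [(hx i₀).1])
      have hne : ⌊(M:ℝ) * x i₀⌋ ≠ 0 := by
        intro h
        apply hi₀
        rw [ht_def, phi, h]
        simp
      have h1' : (1:ℤ) ≤ ⌊(M:ℝ) * x i₀⌋ := lt_of_le_of_ne hfl0 (Ne.symm hne)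
      have h1R : (1:ℝ) ≤ (⌊(M:ℝ) * x i₀⌋ : ℝ) := by exact_mod_cast h1'
      rw [ht_def, phi, le_div_iff₀ hM0, one_div, inv_mul_cancel₀ hM0.ne']
      exact h1R
    have h2 : 1/(M:ℝ) ≤ 1 - t i₀ := by
      have hlt1 : t i₀ < 1 := (hmem i₀).2.2.2
      have : (⌊(M:ℝ) * x i₀⌋ : ℝ) < M := by
        have := hlt1
        rw [ht_def, phi, div_lt_one hM0] at this
        exact this
      have hZ : ⌊(M:ℝ) * x i₀⌋ ≤ (M:ℤ) - 1 := by
        have : ⌊(M:ℝ) * x i₀⌋ < (M:ℤ) := by exact_mod_cast this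
        omega
      have hZR : (⌊(M:ℝ) * x i₀⌋ : ℝ) ≤ (M:ℝ) - 1 := by exact_mod_cast hZ
      have : t i₀ ≤ 1 - 1/M := by
        rw [ht_def, phi, div_le_iff₀ hM0]
        have : (1 - 1/(M:ℝ)) * M = M - 1 := by field_simp
        rw [this]
        exact hZR
      linarith
    exact le_min h1 h2
  have hSt : 1/(M:ℝ)^2 ≤ Sfun d t := by
    have h1 : (1/(M:ℝ))^2 ≤ mfun (t i₀) ^ 2 := by
      apply sq_le_sq' _ hmt
      have : (0:ℝ) < 1/M := by positivity
      linarith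
    calc 1/(M:ℝ)^2 = (1/(M:ℝ))^2 := by ring
    _ ≤ mfun (t i₀) ^ 2 := h1
    _ ≤ Sfun d t := by
        rw [Sfun]
        exact Finset.single_le_sum (f := fun i => mfun (t i) ^ 2)
          (fun i _ => sq_nonneg _) (Finset.mem_univ i₀)
  have hSt_pos : 0 < Sfun d t := lt_of_lt_of_le (by positivity) hSt
  -- upper bound on S x
  have hSx_le : Sfun d x ≤ (2*(d:ℝ)+2) * Sfun d t := by
    have hstep : ∀ i, mfun (x i) ^ 2 ≤ 2 * mfun (t i)^2 + 2 * (1/(M:ℝ))^2 := by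
      intro i
      have hm_le : mfun (x i) ≤ mfun (t i) + 1/M := by
        simp only [mfun]
        rw [← min_add_add_right]
        apply min_le_min
        · exact ((hmem i).2.2.1).le
        · have := (hmem i).2.1
          linarith [one_div_pos.2 hM0]
      have hm0 : 0 ≤ mfun (x i) := mfun_nonneg ⟨(hx i).1.le, (hx i).2.le⟩
      nlinarith [sq_nonneg (mfun (t i) - 1/(M:ℝ))]
    calc Sfun d x ≤ ∑ i : Fin d, (2 * mfun (t i)^2 + 2 * (1/(M:ℝ))^2) :=
          Finset.sum_le_sum fun i _ => hstep i
    _ = 2 * Sfun d t + (d:ℝ) * (2 * (1/(M:ℝ))^2) := by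
        rw [Finset.sum_add_distrib, Finset.sum_const, Finset.card_univ, Fintype.card_fin,
          Sfun, Finset.mul_sum]
        ring
    _ ≤ 2 * Sfun d t + (d:ℝ) * (2 * Sfun d t) := by
        have hd0R : (0:ℝ) ≤ d := Nat.cast_nonneg d
        have : (1/(M:ℝ))^2 ≤ Sfun d t := by
          calc (1/(M:ℝ))^2 = 1/(M:ℝ)^2 := by ring
          _ ≤ Sfun d t := hSt
        nlinarith
    _ = (2*(d:ℝ)+2) * Sfun d t := by ring
  have hSx_pos : 0 < Sfun d x := by
    rw [Sfun]
    refine Finset.sum_pos' (fun i _ => sq_nonneg _) ⟨i₀, Finset.mem_univ _, ?_⟩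
    have : 0 < mfun (x i₀) := lt_min (hx i₀).1 (by linarith [(hx i₀).2])
    positivity
  have hDt := Dfun_ge d htIcc
  have hchain : FF d M x ≤ (2*(d:ℝ)+2)/16 * (Sfun d x)⁻¹ := by
    have h1 : FF d M x ≤ (16 * Sfun d t)⁻¹ := by
      rw [FF, ← ht_def, ffun]
      exact inv_anti₀ (by positivity) hDt
    have h2 : (16 * Sfun d t)⁻¹ ≤ (16 / (2*(d:ℝ)+2) * Sfun d x)⁻¹ := by
      apply inv_anti₀
      · positivity
      · rw [div_mul_eq_mul_div, div_le_iff₀ (by positivity)]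
        calc 16 * Sfun d x ≤ 16 * ((2*(d:ℝ)+2) * Sfun d t) := by nlinarith
        _ = 16 * Sfun d t * (2*(d:ℝ)+2) := by ring
    have h3 : (16 / (2*(d:ℝ)+2) * Sfun d x)⁻¹ = (2*(d:ℝ)+2)/16 * (Sfun d x)⁻¹ := by
      rw [mul_inv, inv_div]
    calc FF d M x ≤ (16 * Sfun d t)⁻¹ := h1
    _ ≤ (16 / (2*(d:ℝ)+2) * Sfun d x)⁻¹ := h2
    _ = (2*(d:ℝ)+2)/16 * (Sfun d x)⁻¹ := h3
  have hprod : ∏ i, vfun d (x i) = ∏ i, ufun d (x i) := by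
    refine Finset.prod_congr rfl fun i _ => ?_
    rw [ufun, Set.indicator_of_mem (Set.mem_Icc.mpr ⟨(hx i).1.le, (hx i).2.le⟩)]
  calc FF d M x ≤ (2*(d:ℝ)+2)/16 * (Sfun d x)⁻¹ := hchain
  _ ≤ (2*(d:ℝ)+2)/16 * ((d:ℝ)⁻¹ * ∏ i, vfun d (x i)) := by
      apply mul_le_mul_of_nonneg_left (inv_S_le hd0 hx)
      positivity
  _ = gfun d x := by rw [gfun, hprod]; push_cast; ring

lemma FF_measurable (d M : ℕ) : Measurable (FF d M) := by
  unfold FF ffun Dfun phi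
  measurability

lemma Dfun_continuous (d : ℕ) : Continuous (Dfun d) := by
  unfold Dfun
  fun_prop

lemma tendsto_FF {d : ℕ} (hd0 : 0 < d) {x : Fin d → ℝ}
    (hx : ∀ i, x i ∈ Set.Ioo (0:ℝ) 1) :
    Tendsto (fun M : ℕ => FF d M x) atTop (nhds (ffun d x)) := by
  have hφ : Tendsto (fun M : ℕ => phi d M x) atTop (nhds x) := by
    rw [tendsto_pi_nhds]
    intro i
    have hub : ∀ᶠ M : ℕ in atTop, phi d M x i ≤ x i := by
      filter_upwards [eventually_ge_atTop 1] with M hM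
      exact (phi_mem hM hx i).2.1
    have hlb : ∀ᶠ M : ℕ in atTop, x i - 1/(M:ℝ) ≤ phi d M x i := by
      filter_upwards [eventually_ge_atTop 1] with M hM
      linarith [(phi_mem hM hx i).2.2.1]
    have h1 : Tendsto (fun M : ℕ => x i - 1/(M:ℝ)) atTop (nhds (x i)) := by
      have := tendsto_one_div_atTop_nhds_zero_nat (𝕜 := ℝ)
      have := (tendsto_const_nhds (x := x i) (f := atTop (α := ℕ))).sub this
      simpa using this
    exact tendsto_of_tendsto_of_tendsto_of_le_of_le' h1 tendsto_const_nhds hlb hub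
  have hD0 : Dfun d x ≠ 0 := by
    have hSx_pos : 0 < Sfun d x := by
      rw [Sfun]
      refine Finset.sum_pos' (fun i _ => sq_nonneg _) ⟨⟨0, hd0⟩, Finset.mem_univ _, ?_⟩
      have h := hx ⟨0, hd0⟩
      have : 0 < mfun (x ⟨0, hd0⟩) := lt_min h.1 (by linarith [h.2])
      positivity
    have := Dfun_ge d (fun i => ⟨(hx i).1.le, (hx i).2.le⟩)
    nlinarith
  have hcont : ContinuousAt (ffun d) x :=
    ((Dfun_continuous d).continuousAt).inv₀ hD0
  exact hcont.tendsto.comp hφ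

def cell (d M : ℕ) (k : Fin d → ℕ) : Set (Fin d → ℝ) :=
  Set.univ.pi fun i => Set.Ico ((k i : ℝ)/M) (((k i : ℝ)+1)/M)

lemma cell_measurable (d M : ℕ) (k : Fin d → ℕ) : MeasurableSet (cell d M k) :=
  MeasurableSet.univ_pi fun _ => measurableSet_Ico

lemma floor_eq_on_cell {d M : ℕ} (hM : 1 ≤ M) (k : Fin d → ℕ) {x : Fin d → ℝ}
    (hx : x ∈ cell d M k) (i : Fin d) : (⌊(M:ℝ) * x i⌋ : ℝ) = (k i : ℝ) := by
  have hM0 : (0:ℝ) < M := by exact_mod_cast hM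
  have h := hx i (Set.mem_univ i)
  obtain ⟨h1, h2⟩ := h
  have hz : ⌊(M:ℝ) * x i⌋ = (k i : ℤ) := by
    rw [Int.floor_eq_iff]
    constructor
    · push_cast
      rw [div_le_iff₀ hM0] at h1
      nlinarith
    · push_cast
      rw [lt_div_iff₀ hM0] at h2
      nlinarith
  rw [hz]
  push_cast
  rfl

lemma FF_eq_on_cell {d M : ℕ} (hM : 1 ≤ M) (k : Fin d → ℕ) {x : Fin d → ℝ}
    (hx : x ∈ cell d M k) : FF d M x = ffun d (fun i => (k i : ℝ)/M) := by
  rw [FF]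
  congr 1
  funext i
  rw [phi, floor_eq_on_cell hM k hx i]

lemma cell_volume {d M : ℕ} (hM : 1 ≤ M) (k : Fin d → ℕ) :
    volume (cell d M k) = ENNReal.ofReal (1/(M:ℝ)) ^ d := by
  have hM0 : (0:ℝ) < M := by exact_mod_cast hM
  rw [cell, volume_pi_pi]
  have h : ∀ i : Fin d, volume (Set.Ico ((k i : ℝ)/M) (((k i : ℝ)+1)/M))
      = ENNReal.ofReal (1/(M:ℝ)) := by
    intro i
    rw [Real.volume_Ico]
    congr 1
    field_simp
    ring
  rw [Finset.prod_congr rfl (fun i _ => h i), Finset.prod_const, Finset.card_univ,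
    Fintype.card_fin]

lemma piece_integral {d M : ℕ} (hM : 1 ≤ M) (k : Fin d → ℕ) :
    ∫ x in cell d M k, FF d M x
      = (1/(M:ℝ))^d * ffun d (fun i => (k i : ℝ)/M) := by
  have hM0 : (0:ℝ) < M := by exact_mod_cast hM
  rw [setIntegral_congr_fun (cell_measurable d M k) (fun x hx => FF_eq_on_cell hM k hx),
    setIntegral_const, measureReal_def, cell_volume hM k, smul_eq_mul]
  congr 1
  rw [ENNReal.toReal_pow, ENNReal.toReal_ofReal (by positivity)]

lemma cell_union {d M : ℕ} (hM : 1 ≤ M) :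
    (Set.univ.pi fun _ : Fin d => Set.Ico (0:ℝ) 1)
      = ⋃ k ∈ Fintype.piFinset (fun _ : Fin d => Finset.range M), cell d M k := by
  have hM0 : (0:ℝ) < M := by exact_mod_cast hM
  ext x
  constructor
  · intro h
    have h' : ∀ i, 0 ≤ x i ∧ x i < 1 := fun i => h i (Set.mem_univ i)
    have hflnn : ∀ i, (0:ℤ) ≤ ⌊(M:ℝ) * x i⌋ :=
      fun i => Int.floor_nonneg.2 (mul_nonneg hM0.le (h' i).1)
    refine Set.mem_iUnion₂.2 ⟨fun i => (⌊(M:ℝ) * x i⌋).toNat, ?_, ?_⟩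
    · rw [Fintype.mem_piFinset]
      intro i
      rw [Finset.mem_range]
      have hlt : (⌊(M:ℝ) * x i⌋ : ℝ) < M := by
        calc (⌊(M:ℝ) * x i⌋ : ℝ) ≤ M * x i := Int.floor_le _
        _ < M := by nlinarith [(h' i).1, (h' i).2]
      have hltZ : ⌊(M:ℝ) * x i⌋ < (M:ℤ) := by exact_mod_cast hlt
      omega
    · intro i _
      have hcast : (((⌊(M:ℝ) * x i⌋).toNat : ℕ) : ℝ) = (⌊(M:ℝ) * x i⌋ : ℝ) := by
        have := Int.toNat_of_nonneg (hflnn i)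
        exact_mod_cast this
      constructor
      · rw [hcast, div_le_iff₀ hM0, mul_comm]
        exact Int.floor_le _
      · rw [hcast, lt_div_iff₀ hM0, mul_comm]
        exact Int.lt_floor_add_one _
  · intro h
    obtain ⟨k, hk, hxk⟩ := Set.mem_iUnion₂.1 h
    rw [Fintype.mem_piFinset] at hk
    intro i _
    obtain ⟨h1, h2⟩ := hxk i (Set.mem_univ i)
    have hki : k i < M := Finset.mem_range.1 (hk i)
    have hki1 : ((k i : ℝ) + 1) ≤ M := by
      have : (k i : ℝ) + 1 ≤ (M:ℝ) := by exact_mod_cast Nat.succ_le_of_lt hki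
      exact this
    constructor
    · exact le_trans (by positivity) h1
    · calc x i < ((k i : ℝ) + 1)/M := h2
      _ ≤ 1 := by rw [div_le_one hM0]; exact hki1

lemma cell_disjoint {d M : ℕ} (hM : 1 ≤ M) :
    Set.Pairwise ↑(Fintype.piFinset fun _ : Fin d => Finset.range M)
      (Function.onFun Disjoint (cell d M)) := by
  intro k _ l _ hkl
  have hex : ∃ i, k i ≠ l i := by
    by_contra hc
    push_neg at hc
    exact hkl (funext hc)
  obtain ⟨i, hi⟩ := hex
  rw [Function.onFun]
  rw [Set.disjoint_left]
  intro x hxk hxl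
  apply hi
  have e1 := floor_eq_on_cell hM k hxk i
  have e2 := floor_eq_on_cell hM l hxl i
  have : (k i : ℝ) = (l i : ℝ) := by rw [← e1, ← e2]
  exact_mod_cast this

lemma rave_eq {d : ℕ} (hd0 : 0 < d) {M : ℕ} (hM : 1 ≤ M) :
    RaveTorus d M = ∫ x in cube d, FF d M x := by
  have hM0 : (0:ℝ) < M := by exact_mod_cast hM
  have hfilter :
      ∑ k ∈ (Fintype.piFinset fun _ : Fin d => Finset.range M).filter (· ≠ 0),
        (2 * (d:ℝ) - 2 * ∑ i, Real.cos (2 * π * (k i) / M))⁻¹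
      = ∑ k ∈ Fintype.piFinset fun _ : Fin d => Finset.range M,
        (2 * (d:ℝ) - 2 * ∑ i, Real.cos (2 * π * (k i) / M))⁻¹ := by
    apply Finset.sum_filter_of_ne
    intro k _ hfk
    intro hk0
    apply hfk
    subst hk0
    simp
  have hsummand : ∀ k : Fin d → ℕ,
      (2 * (d:ℝ) - 2 * ∑ i, Real.cos (2 * π * (k i) / M))⁻¹
        = ffun d (fun i => (k i : ℝ)/M) := by
    intro k
    simp only [ffun, Dfun, mul_div_assoc]
  have hIco : ∫ x in (Set.univ.pi fun _ : Fin d => Set.Ico (0:ℝ) 1), FF d M x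
      = ∫ x in cube d, FF d M x := by
    apply setIntegral_congr_set
    have h := Measure.univ_pi_Ico_ae_eq_Icc
      (μ := fun _ : Fin d => (volume : Measure ℝ)) (f := fun _ => (0:ℝ)) (g := fun _ => 1)
    rw [← volume_pi, ← Set.pi_univ_Icc] at h
    exact h
  have hintcell : ∀ k ∈ Fintype.piFinset fun _ : Fin d => Finset.range M,
      IntegrableOn (FF d M) (cell d M k) := by
    intro k _
    apply IntegrableOn.congr_fun
      (f := fun _ => ffun d (fun i => (k i : ℝ)/M))
    · rw [IntegrableOn, integrable_const_iff]
      right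
      constructor
      rw [Measure.restrict_apply_univ, cell_volume hM k]
      exact ENNReal.pow_lt_top ENNReal.ofReal_lt_top
    · exact fun x hx => (FF_eq_on_cell hM k hx).symm
    · exact cell_measurable d M k
  calc RaveTorus d M
      = (1 / (M : ℝ) ^ d) * ∑ k ∈ Fintype.piFinset fun _ : Fin d => Finset.range M,
          (2 * (d:ℝ) - 2 * ∑ i, Real.cos (2 * π * (k i) / M))⁻¹ := by
        rw [RaveTorus, hfilter]
    _ = ∑ k ∈ Fintype.piFinset fun _ : Fin d => Finset.range M,
          (1/(M:ℝ))^d * ffun d (fun i => (k i : ℝ)/M) := by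
        rw [Finset.mul_sum]
        refine Finset.sum_congr rfl fun k _ => ?_
        rw [hsummand k, one_div_pow]
    _ = ∑ k ∈ Fintype.piFinset fun _ : Fin d => Finset.range M,
          ∫ x in cell d M k, FF d M x := by
        refine Finset.sum_congr rfl fun k _ => (piece_integral hM k).symm
    _ = ∫ x in ⋃ k ∈ Fintype.piFinset fun _ : Fin d => Finset.range M, cell d M k,
          FF d M x :=
        (integral_biUnion_finset _ (fun k _ => cell_measurable d M k)
          (cell_disjoint hM) hintcell).symm
    _ = ∫ x in (Set.univ.pi fun _ : Fin d => Set.Ico (0:ℝ) 1), FF d M x := by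
        rw [cell_union hM]
    _ = ∫ x in cube d, FF d M x := hIco

end

end TorusAux

theorem torus_resistance_tendsto_hydro (d : ℕ) (hd : 3 ≤ d) :
    Tendsto (fun M : ℕ => RaveTorus d M) atTop
      (nhds (∫ x in (Set.univ.pi fun _ : Fin d => Set.Icc (0 : ℝ) 1),
        (2 * d - 2 * ∑ i, Real.cos (2 * π * x i))⁻¹)) := by
  have hd0 : 0 < d := by omega
  have hmeas_cube : MeasurableSet (TorusAux.cube d) :=
    MeasurableSet.univ_pi fun _ => measurableSet_Icc
  have hae_Ioo : ∀ᵐ x ∂(volume.restrict (TorusAux.cube d)),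
      ∀ i, x i ∈ Set.Ioo (0:ℝ) 1 := by
    have h1 : ∀ᵐ x : Fin d → ℝ ∂volume, ∀ i : Fin d, x i ≠ 0 ∧ x i ≠ 1 := by
      rw [MeasureTheory.ae_all_iff]
      intro i
      have h0 := MeasureTheory.Measure.ae_eval_ne (fun _ : Fin d => (volume : Measure ℝ)) i 0
      have h1' := MeasureTheory.Measure.ae_eval_ne (fun _ : Fin d => (volume : Measure ℝ)) i 1
      rw [← volume_pi] at h0 h1'
      exact h0.and h1'
    filter_upwards [ae_restrict_mem hmeas_cube, ae_restrict_of_ae h1] with x hx hne i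
    have hxi := hx i (Set.mem_univ i)
    exact ⟨lt_of_le_of_ne hxi.1 (Ne.symm (hne i).1), lt_of_le_of_ne hxi.2 (hne i).2⟩
  have key := MeasureTheory.tendsto_integral_of_dominated_convergence
    (μ := volume.restrict (TorusAux.cube d)) (F := TorusAux.FF d) (f := TorusAux.ffun d)
    (TorusAux.gfun d)
    (fun M => (TorusAux.FF_measurable d M).aestronglyMeasurable)
    ((TorusAux.gfun_integrable hd).restrict)
    (fun M => by
      filter_upwards [hae_Ioo] with x hx
      exact TorusAux.FF_le_gfun hd M hx)
    (by
      filter_upwards [hae_Ioo] with x hx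
      exact TorusAux.tendsto_FF hd0 hx)
  have heq : (fun M : ℕ => ∫ x in TorusAux.cube d, TorusAux.FF d M x)
      =ᶠ[atTop] (fun M : ℕ => RaveTorus d M) := by
    filter_upwards [eventually_ge_atTop 1] with M hM
    exact (TorusAux.rave_eq hd0 hM).symm
  exact Tendsto.congr' heq key
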